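/- arXiv:2103.13975 — 3 statements merged into one kernel-verified Lean document; each statement's English description precedes it below -/
import Mathlib

section
/- Let X be a smooth projective curve over a field K admitting two distinct commuting involutions v and w. Suppose Q is a point of X defined over a degree 4 extension of K whose image in the quotient X/⟨v,w⟩ is defined over a quadratic extension of K. Then the image of Q in at least one of the three quotient curves X/v, X/w, X/vw is defined over a quadratic extension of K. -/
/-!
STATEMENT 0 (Lemma "diagramlemma" of the paper).

Modeling: points of the curve `X` over an algebraic closure of `K` form a type `X`
with an action of the absolute Galois group `G = Gal(K̄/K)`.  The involutions
`v, w : X → X` are defined over `K`, i.e. they commute with the Galois action.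
A point defined over an extension of degree `d` of `K` has Galois orbit of size `d`
(quadratic = degree at most 2, so orbit of size at most 2).
The image of `Q` in the quotient `X/v` is the `⟨v⟩`-orbit `{Q, v Q}`, on which Galois
acts pointwise (the pointwise action of `G` on `Set X`); its field of definition has
degree = size of its Galois orbit.  Similarly for `X/w`, `X/vw` and `X/⟨v,w⟩`
(whose point below `Q` is `{Q, v Q, w Q, v (w Q)}`).
-/

open Pointwise


section Aux
variable {G X : Type*} [Group G] [MulAction G X]

lemma orbit_set_image (f : X → Set X) (hf : ∀ (g : G) (x : X), f (g • x) = g • f x)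
    (Q : X) : MulAction.orbit G (f Q) = f '' (MulAction.orbit G Q) := by
  ext s
  constructor
  · rintro ⟨g, rfl⟩
    exact ⟨g • Q, ⟨g, rfl⟩, hf g Q⟩
  · rintro ⟨x, ⟨g, rfl⟩, rfl⟩
    exact ⟨g, (hf g Q).symm⟩

lemma smul_mem_orbit' {Q : X} (g : G) {x : X} (hx : x ∈ MulAction.orbit G Q) :
    g • x ∈ MulAction.orbit G Q := by
  obtain ⟨h, rfl⟩ := hx
  exact ⟨g * h, mul_smul g h Q⟩

lemma pair_equivariant (u : X → X) (huG : ∀ (g : G) (x : X), u (g • x) = g • u x)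
    (g : G) (x : X) : ({g • x, u (g • x)} : Set X) = g • ({x, u x} : Set X) := by
  rw [Set.smul_set_insert, Set.smul_set_singleton, huG]

lemma key (u : X → X) (hu : Function.Involutive u)
    (huG : ∀ (g : G) (x : X), u (g • x) = g • u x) (Q : X)
    (hQ : Nat.card (MulAction.orbit G Q) = 4)
    (hne : u Q ≠ Q) (hmem : u Q ∈ MulAction.orbit G Q) :
    Nat.card (MulAction.orbit G ({Q, u Q} : Set X)) ≤ 2 := by
  set O := MulAction.orbit G Q with hO
  have hcard : O.ncard = 4 := by rw [← Nat.card_coe_set_eq]; exact hQ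
  have hfin : O.Finite := by
    by_contra h
    rw [Set.Infinite.ncard h] at hcard
    norm_num at hcard
  have hfix : ∀ x ∈ O, u x ≠ x := by
    rintro x ⟨g, rfl⟩ h
    rw [huG] at h
    exact hne (smul_left_cancel g h)
  have hQO : Q ∈ O := MulAction.mem_orbit_self Q
  have huQO : u Q ∈ O := hmem
  obtain ⟨a, haO, ha⟩ : ∃ a ∈ O, a ∉ ({Q, u Q} : Set X) := by
    by_contra h
    push_neg at h
    have hsub : O ⊆ ({Q, u Q} : Set X) := h
    have h1 := Set.ncard_le_ncard hsub (Set.toFinite _)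
    have h2 : ({Q, u Q} : Set X).ncard ≤ 2 := by
      calc ({Q, u Q} : Set X).ncard ≤ ({u Q} : Set X).ncard + 1 := Set.ncard_insert_le _ _
        _ ≤ 2 := by rw [Set.ncard_singleton]
    omega
  simp only [Set.mem_insert_iff, Set.mem_singleton_iff, not_or] at ha
  obtain ⟨haQ, hauQ⟩ := ha
  have huaO : u a ∈ O := by
    obtain ⟨g, rfl⟩ := haO
    rw [huG]
    exact smul_mem_orbit' g hmem
  have hua_ne : u a ≠ a := hfix a haO
  have huaQ : u a ≠ Q := fun h => hauQ (by rw [← h, hu])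
  have huauQ : u a ≠ u Q := fun h => haQ (hu.injective h)
  have hquadcard : ({Q, u Q, a, u a} : Set X).ncard = 4 := by
    rw [Set.ncard_insert_of_notMem (by simp [Ne.symm hne, Ne.symm haQ, Ne.symm huaQ]),
      Set.ncard_insert_of_notMem (by simp [Ne.symm hauQ, Ne.symm huauQ]),
      Set.ncard_pair (Ne.symm hua_ne)]
  have hquad : ({Q, u Q, a, u a} : Set X) = O := by
    apply Set.eq_of_subset_of_ncard_le
    · intro x hx
      rcases hx with rfl | rfl | rfl | rfl
      · exact hQO
      · exact huQO
      · exact haO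
      · exact huaO
    · rw [hcard, hquadcard]
    · exact hfin
  have horb : MulAction.orbit G ({Q, u Q} : Set X)
      = (fun x => ({x, u x} : Set X)) '' O := by
    exact orbit_set_image (fun x => ({x, u x} : Set X))
      (fun g x => pair_equivariant u huG g x) Q
  have himg : (fun x => ({x, u x} : Set X)) '' O
      ⊆ {({Q, u Q} : Set X), ({a, u a} : Set X)} := by
    rintro s ⟨x, hx, rfl⟩
    rw [← hquad] at hx
    rcases hx with rfl | rfl | rfl | rfl
    · exact Or.inl rfl
    · left; show ({u Q, u (u Q)} : Set X) = _; rw [hu Q]; exact Set.pair_comm _ _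
    · exact Or.inr rfl
    · right; show ({u a, u (u a)} : Set X) = _; rw [hu a]; exact Set.pair_comm _ _
  rw [Nat.card_coe_set_eq, horb]
  calc ((fun x => ({x, u x} : Set X)) '' O).ncard
      ≤ ({({Q, u Q} : Set X), ({a, u a} : Set X)} : Set (Set X)).ncard :=
        Set.ncard_le_ncard himg (Set.toFinite _)
    _ ≤ ({({a, u a} : Set X)} : Set (Set X)).ncard + 1 := Set.ncard_insert_le _ _
    _ ≤ 2 := by rw [Set.ncard_singleton]

end Aux

theorem stmt0 {G X : Type*} [Group G] [MulAction G X]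
    (v w : X → X)
    (hv : Function.Involutive v) (hw : Function.Involutive w)
    (hvw : Function.Commute v w) (hne : v ≠ w)
    (hvG : ∀ (g : G) (x : X), v (g • x) = g • v x)
    (hwG : ∀ (g : G) (x : X), w (g • x) = g • w x)
    (Q : X)
    -- `Q` is defined over a degree 4 extension of `K`:
    (hQ : Nat.card (MulAction.orbit G Q) = 4)
    -- the image of `Q` in `X/⟨v,w⟩` is defined over a quadratic extension of `K`:
    (hbot : Nat.card (MulAction.orbit G ({Q, v Q, w Q, v (w Q)} : Set X)) ≤ 2) :
    -- the image of `Q` in one of `X/v`, `X/w`, `X/vw` is defined over a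
    -- quadratic extension of `K`:
    Nat.card (MulAction.orbit G ({Q, v Q} : Set X)) ≤ 2 ∨
      Nat.card (MulAction.orbit G ({Q, w Q} : Set X)) ≤ 2 ∨
      Nat.card (MulAction.orbit G ({Q, v (w Q)} : Set X)) ≤ 2 := by
  set O := MulAction.orbit G Q with hO
  by_cases h1 : v Q = Q
  · -- then the bottom set is {Q, w Q}
    have hvwQ : v (w Q) = w Q := by rw [hvw Q, h1]
    have hset : ({Q, v Q, w Q, v (w Q)} : Set X) = {Q, w Q} := by
      rw [h1, hvwQ]; ext x; simp only [Set.mem_insert_iff, Set.mem_singleton_iff]; tauto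
    rw [hset] at hbot
    exact Or.inr (Or.inl hbot)
  by_cases h2 : w Q = Q
  · have hvwQ : v (w Q) = v Q := by rw [h2]
    have hset : ({Q, v Q, w Q, v (w Q)} : Set X) = {Q, v Q} := by
      rw [hvwQ, h2]; ext x; simp only [Set.mem_insert_iff, Set.mem_singleton_iff]; tauto
    rw [hset] at hbot
    exact Or.inl hbot
  by_cases h3 : v (w Q) = Q
  · have hwvQ : w Q = v Q := by rw [← hv (w Q), h3]
    have hset : ({Q, v Q, w Q, v (w Q)} : Set X) = {Q, v Q} := by
      rw [h3, hwvQ]; ext x; simp only [Set.mem_insert_iff, Set.mem_singleton_iff]; tauto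
    rw [hset] at hbot
    exact Or.inl hbot
  -- main case: none of v Q, w Q, v (w Q) equals Q
  have hvwinv : Function.Involutive (fun x => v (w x)) := by
    intro x
    simp only
    rw [← hvw (w x), hv, hw]
  have hvwG : ∀ (g : G) (x : X), v (w (g • x)) = g • v (w x) := by
    intro g x; rw [hwG, hvG]
  have hmem : v Q ∈ O ∨ w Q ∈ O ∨ v (w Q) ∈ O := by
    by_contra h
    push_neg at h
    obtain ⟨hA, hB, hC⟩ := h
    -- then the map x ↦ {x, v x, w x, v (w x)} is injective on O
    have hvO : ∀ x ∈ O, v x ∉ O := by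
      rintro x ⟨g, rfl⟩ hmem
      apply hA
      have := smul_mem_orbit' g⁻¹ hmem
      rwa [hvG, inv_smul_smul] at this
    have hwO : ∀ x ∈ O, w x ∉ O := by
      rintro x ⟨g, rfl⟩ hmem
      apply hB
      have := smul_mem_orbit' g⁻¹ hmem
      rwa [hwG, inv_smul_smul] at this
    have hvwO : ∀ x ∈ O, v (w x) ∉ O := by
      rintro x ⟨g, rfl⟩ hmem
      apply hC
      have := smul_mem_orbit' g⁻¹ hmem
      rwa [hvwG, inv_smul_smul] at this
    have hinj : Set.InjOn (fun x => ({x, v x, w x, v (w x)} : Set X)) O := by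
      intro x hx y hy hxy
      have hy' : y ∈ ({x, v x, w x, v (w x)} : Set X) := by
        rw [show ({x, v x, w x, v (w x)} : Set X) = {y, v y, w y, v (w y)} from hxy]
        exact Set.mem_insert _ _
      rcases hy' with h | h | h | h
      · exact h.symm
      · exact absurd (h ▸ hy) (hvO x hx)
      · exact absurd (h ▸ hy) (hwO x hx)
      · exact absurd (h ▸ hy) (hvwO x hx)
    have hequi : ∀ (g : G) (x : X),
        (fun x => ({x, v x, w x, v (w x)} : Set X)) (g • x)
          = g • (fun x => ({x, v x, w x, v (w x)} : Set X)) x := by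
      intro g x
      simp only [Set.smul_set_insert, Set.smul_set_singleton, hwG, hvG]
    have horb := orbit_set_image (G := G) (fun x => ({x, v x, w x, v (w x)} : Set X)) hequi Q
    rw [Nat.card_coe_set_eq, horb, Set.ncard_image_of_injOn hinj,
      ← Nat.card_coe_set_eq, hQ] at hbot
    omega
  rcases hmem with h | h | h
  · exact Or.inl (key v hv hvG Q hQ h1 h)
  · exact Or.inr (Or.inl (key w hw hwG Q hQ h2 h))
  · exact Or.inr (Or.inr (key (fun x => v (w x)) hvwinv hvwG Q hQ h3 h))
end

section
/- Let ρ : X → C be a degree d morphism of smooth projective curves over a field K, and let D₀ be a K-rational effective divisor of degree e on C. If the Riemann–Roch space L(ρ*D₀) on X equals the pullback ρ*L(D₀) of the Riemann–Roch space on C, then every effective K-rational divisor D of degree de on X with [D − ρ*D₀] = 0 in J(X)(K) is of the form ρ*D' for some effective K-rational divisor D' of degree e on C. -/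
/-!
STATEMENT 5 (Corollary "rrcor" of the paper).

Modeling (as in Statement 4): `Xpt`, `Cpt` are the closed points of the smooth
projective curves `X` and `C` over the field `K`; divisors are elements of
`Xpt →₀ ℤ` resp. `Cpt →₀ ℤ`, `FX = K(X)` and `FC = K(C)` are the function
fields.  The degree-`d` morphism `ρ : X → C` induces the pullback
`ρfun = ρ* : K(C) → K(X)` on functions (`f ↦ f ∘ ρ`) and the pullback
`ρdiv = ρ* : Div(C) → Div(X)` on divisors; the key compatibility is
`div(ρ*f) = ρ*(div f)`.  Riemann–Roch spaces:
`L(D) = {f : div f + D ≥ 0} ∪ {0}`.  `[D − ρ*D₀] = 0` in `J(X)(K)` means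
`D − ρ*D₀` is principal.

The claim: if `L(ρ*D₀) = ρ* L(D₀)` then every effective `K`-rational divisor
`D` of degree `d·e` on `X` with `[D − ρ*D₀] = 0` is the pullback `ρ*D'` of an
effective `K`-rational divisor `D'` of degree `e` on `C`.
-/

theorem stmt5 {Xpt Cpt FX FC : Type*} [Field FX] [Field FC]
    (divX : FXˣ → (Xpt →₀ ℤ)) (divC : FCˣ → (Cpt →₀ ℤ))
    (hdivC : ∀ f : FCˣ, (divC f).sum (fun _ n => n) = 0)
    (ρfun : FC →+* FX)
    (ρdiv : (Cpt →₀ ℤ) →+ (Xpt →₀ ℤ))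
    (hcompat : ∀ f : FCˣ, divX (Units.map ρfun.toMonoidHom f) = ρdiv (divC f))
    (d e : ℕ) (hd : 0 < d)
    (D₀ : Cpt →₀ ℤ) (hD₀eff : ∀ pt, 0 ≤ D₀ pt)
    (hD₀deg : D₀.sum (fun _ n => n) = (e : ℤ))
    -- the hypothesis `L(ρ*D₀) = ρ* L(D₀)`:
    (hRR : {h : FX | h = 0 ∨ ∃ u : FXˣ, (u : FX) = h ∧ ∀ pt, 0 ≤ (divX u + ρdiv D₀) pt}
         = ρfun '' {h : FC | h = 0 ∨ ∃ u : FCˣ, (u : FC) = h ∧ ∀ pt, 0 ≤ (divC u + D₀) pt})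
    (D : Xpt →₀ ℤ) (hDeff : ∀ pt, 0 ≤ D pt)
    (hDdeg : D.sum (fun _ n => n) = (d * e : ℕ))
    (hclass : ∃ f : FXˣ, D - ρdiv D₀ = divX f) :
    ∃ D' : Cpt →₀ ℤ, (∀ pt, 0 ≤ D' pt) ∧ D'.sum (fun _ n => n) = (e : ℤ) ∧
      D = ρdiv D' := by
  obtain ⟨f, hf⟩ := hclass
  have hfD : divX f + ρdiv D₀ = D := by
    have := hf; linear_combination (norm := abel) -this
  have hfL : (f : FX) ∈ {h : FX | h = 0 ∨ ∃ u : FXˣ, (u : FX) = h ∧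
      ∀ pt, 0 ≤ (divX u + ρdiv D₀) pt} := by
    exact Or.inr ⟨f, rfl, fun pt => by rw [hfD]; exact hDeff pt⟩
  rw [hRR] at hfL
  obtain ⟨h, hh, hhf⟩ := hfL
  rcases hh with rfl | ⟨u, hu, hueff⟩
  · exact absurd hhf.symm (by simp [f.ne_zero])
  · have huf : Units.map ρfun.toMonoidHom u = f := by
      ext
      simp [hu, hhf]
    refine ⟨divC u + D₀, fun pt => hueff pt, ?_, ?_⟩
    · rw [Finsupp.sum_add_index' (fun _ => rfl) (fun _ _ _ => rfl), hdivC, hD₀deg,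
        zero_add]
    · rw [← hfD, ← huf, hcompat, map_add]
end

section
/- Let p₁, p₂, p₃ be pairwise coprime prime powers and let P be a non-cuspidal point on X₀(p₁p₂p₃) defined over a number field of degree 4 whose image in X₀(p₁p₂p₃)* := X₀(p₁p₂p₃)/⟨w_{p₁}, w_{p₂}, w_{p₃}⟩ is a rational point. Then the elliptic curve corresponding to P is a ℚ-curve (isogenous over the algebraic closure to each of its Galois conjugates). -/
/-!
STATEMENT 6 (Lemma "Qcurvelemma" of the paper).

Modeling: `X` is the set of `ℚ̄`-points of the modular curve `X₀(p₁p₂p₃)`,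
acted on by the absolute Galois group `G = Gal(ℚ̄/ℚ)`; a point defined over a
number field of degree 4 has Galois orbit of size 4.  `w₁, w₂, w₃` are the
Atkin–Lehner involutions `w_{p₁}, w_{p₂}, w_{p₃}`; they commute pairwise and
are defined over `ℚ` (commute with the Galois action).  `cusps` is the set of
cusps; a non-cuspidal point `Y` carries an underlying elliptic curve `E Y`
(element of the type `Ell` of elliptic curves over `ℚ̄`), `isog` is the
(equivalence) relation of being isogenous over `ℚ̄`, and the key fact about
Atkin–Lehner involutions is that `E Y` and `E (wᵢ Y)` are isogenous.  The image
of `P` in `X₀(p₁p₂p₃)* = X₀(p₁p₂p₃)/⟨w₁,w₂,w₃⟩` being a rational point means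
that every Galois conjugate of `P` lies in the `⟨w₁,w₂,w₃⟩`-orbit of `P`
(the fiber over the rational point is the `W`-orbit, a Galois-stable set).

Conclusion: the elliptic curve corresponding to `P` is a `ℚ`-curve, i.e.
`E P` is isogenous over `ℚ̄` to each of its Galois conjugates `E (g • P)`.
-/

theorem stmt6 {G X Ell : Type*} [Group G] [MulAction G X]
    (p₁ p₂ p₃ : ℕ) (hp₁ : IsPrimePow p₁) (hp₂ : IsPrimePow p₂) (hp₃ : IsPrimePow p₃)
    (hcop₁₂ : Nat.Coprime p₁ p₂) (hcop₁₃ : Nat.Coprime p₁ p₃) (hcop₂₃ : Nat.Coprime p₂ p₃)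
    (w₁ w₂ w₃ : X → X)
    (hw₁ : Function.Involutive w₁) (hw₂ : Function.Involutive w₂)
    (hw₃ : Function.Involutive w₃)
    (hc₁₂ : Function.Commute w₁ w₂) (hc₁₃ : Function.Commute w₁ w₃)
    (hc₂₃ : Function.Commute w₂ w₃)
    (hw₁G : ∀ (g : G) (x : X), w₁ (g • x) = g • w₁ x)
    (hw₂G : ∀ (g : G) (x : X), w₂ (g • x) = g • w₂ x)
    (hw₃G : ∀ (g : G) (x : X), w₃ (g • x) = g • w₃ x)
    (cusps : Set X)
    (E : X → Ell)
    (isog : Ell → Ell → Prop) (hisog : Equivalence isog)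
    -- Atkin–Lehner involutions move points to points with isogenous underlying curves:
    (hAL₁ : ∀ Y : X, isog (E Y) (E (w₁ Y)))
    (hAL₂ : ∀ Y : X, isog (E Y) (E (w₂ Y)))
    (hAL₃ : ∀ Y : X, isog (E Y) (E (w₃ Y)))
    (P : X) (hPnc : P ∉ cusps)
    -- `P` is a quartic point:
    (hPdeg : Nat.card (MulAction.orbit G P) = 4)
    -- the image of `P` in `X₀(p₁p₂p₃)* = X₀(p₁p₂p₃)/⟨w₁,w₂,w₃⟩` is rational:
    (hrat : ∀ g : G, ∃ ε₁ ε₂ ε₃ : Bool,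
      g • P = (cond ε₁ w₁ id) ((cond ε₂ w₂ id) ((cond ε₃ w₃ id) P))) :
    -- `P` corresponds to a `ℚ`-curve:
    ∀ g : G, isog (E P) (E (g • P)) := by
  intro g
  obtain ⟨ε₁, ε₂, ε₃, h⟩ := hrat g
  rw [h]
  have step : ∀ (ε : Bool) (w : X → X), (∀ Y, isog (E Y) (E (w Y))) →
      ∀ Y : X, isog (E Y) (E ((cond ε w id) Y)) := by
    intro ε w hw Y
    cases ε
    · exact hisog.refl _
    · exact hw Y
  exact hisog.trans (step ε₃ w₃ hAL₃ P)
    (hisog.trans (step ε₂ w₂ hAL₂ _) (step ε₁ w₁ hAL₁ _))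
end
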